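/- Let G admit an (ε,η)-almost-clique decomposition V = V_sparse ∪ C_1 ∪ ... ∪ C_k, let C and C' be two distinct almost-cliques, and let u ∈ C and w ∈ C'. Then |N(u) ∩ N(w)| ≤ 2εΔ. -/

import Mathlib

open Finset

variable {V : Type*} [Fintype V] [DecidableEq V]

/-- Nodes `u, v` are `ε`-similar if `|N(u) ∩ N(v)| ≥ (1−ε)Δ`, where `Δ` is the
maximum degree of `G`. -/
abbrev Similar' (G : SimpleGraph V) [DecidableRel G.Adj] (ε : ℝ) (u v : V) : Prop :=
  (1 - ε) * (G.maxDegree : ℝ) ≤ ((G.neighborFinset u ∩ G.neighborFinset v).card : ℝ)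

/-- Nodes `u, v` are `ε`-friends if they are `ε`-similar and adjacent. -/
abbrev Friends (G : SimpleGraph V) [DecidableRel G.Adj] (ε : ℝ) (u v : V) : Prop :=
  Similar' G ε u v ∧ G.Adj u v

/-- A node is `ε`-dense if it has at least `(1−ε)Δ` `ε`-friends. -/
def IsDense (G : SimpleGraph V) [DecidableRel G.Adj] (ε : ℝ) (v : V) : Prop :=
  (1 - ε) * (G.maxDegree : ℝ) ≤ ((univ.filter (fun w => Friends G ε v w)).card : ℝ)

/-- An `(ε,η)`-almost-clique decomposition of `G`: a partition
`V = V_sparse ∪ C 0 ∪ ... ∪ C (k-1)` such that `V_sparse` contains no `η`-dense node,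
`(1−ε)Δ ≤ |C i| ≤ (1+ε)Δ`, and every `v ∈ C i` has at least `(1−ε)Δ` neighbors in `C i`. -/
structure IsACD (G : SimpleGraph V) [DecidableRel G.Adj] (ε η : ℝ) {k : ℕ}
    (Vsp : Finset V) (C : Fin k → Finset V) : Prop where
  cover : ∀ v : V, v ∈ Vsp ∨ ∃ i, v ∈ C i
  disjoint_sparse : ∀ i, Disjoint Vsp (C i)
  disjoint_cliques : ∀ i j, i ≠ j → Disjoint (C i) (C j)
  sparse_not_dense : ∀ v ∈ Vsp, ¬ IsDense G η v
  card_lower : ∀ i, (1 - ε) * (G.maxDegree : ℝ) ≤ ((C i).card : ℝ)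
  card_upper : ∀ i, ((C i).card : ℝ) ≤ (1 + ε) * (G.maxDegree : ℝ)
  nbr_lower : ∀ i, ∀ v ∈ C i, (1 - ε) * (G.maxDegree : ℝ) ≤ ((G.neighborFinset v ∩ C i).card : ℝ)

/-- In an `(ε,η)`-ACD, if `u ∈ C i` and `w ∈ C j` with `i ≠ j`, then
`|N(u) ∩ N(w)| ≤ 2εΔ`. -/
theorem stmt5 (G : SimpleGraph V) [DecidableRel G.Adj] (ε η : ℝ)
    (hε : ε ∈ Set.Ioo (0 : ℝ) 1) (hη : η ∈ Set.Ioo (0 : ℝ) 1)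
    {k : ℕ} (Vsp : Finset V) (C : Fin k → Finset V) (hACD : IsACD G ε η Vsp C)
    (i j : Fin k) (hij : i ≠ j) (u w : V) (hu : u ∈ C i) (hw : w ∈ C j) :
    ((G.neighborFinset u ∩ G.neighborFinset w).card : ℝ) ≤ 2 * ε * (G.maxDegree : ℝ) := by
  set A := G.neighborFinset u
  set B := G.neighborFinset w
  have hsub : A ∩ B ⊆ (A \ C i) ∪ (B \ C j) := by
    intro x hx
    simp only [mem_inter] at hx
    by_cases hxi : x ∈ C i
    · have hxj : x ∉ C j := fun hxj =>
        (hACD.disjoint_cliques i j hij).forall_ne_finset hxi hxj rfl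
      exact mem_union.mpr (Or.inr (mem_sdiff.mpr ⟨hx.2, hxj⟩))
    · exact mem_union.mpr (Or.inl (mem_sdiff.mpr ⟨hx.1, hxi⟩))
  have hcard : (A ∩ B).card ≤ (A \ C i).card + (B \ C j).card :=
    (card_le_card hsub).trans (card_union_le _ _)
  have hAu : (A \ C i).card + (A ∩ C i).card = A.card := by
    exact card_sdiff_add_card_inter A (C i)
  have hBw : (B \ C j).card + (B ∩ C j).card = B.card := by
    exact card_sdiff_add_card_inter B (C j)
  have hdegA : (A.card : ℝ) ≤ (G.maxDegree : ℝ) := by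
    exact_mod_cast (G.degree_le_maxDegree u).trans_eq' (G.card_neighborFinset_eq_degree u)
  have hdegB : (B.card : ℝ) ≤ (G.maxDegree : ℝ) := by
    exact_mod_cast (G.degree_le_maxDegree w).trans_eq' (G.card_neighborFinset_eq_degree w)
  have hAi := hACD.nbr_lower i u hu
  have hBj := hACD.nbr_lower j w hw
  have h1 : ((A \ C i).card : ℝ) ≤ ε * (G.maxDegree : ℝ) := by
    have := hAu
    push_cast [← this] at hdegA
    nlinarith [hAi]
  have h2 : ((B \ C j).card : ℝ) ≤ ε * (G.maxDegree : ℝ) := by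
    push_cast [← hBw] at hdegB
    nlinarith [hBj]
  calc ((A ∩ B).card : ℝ) ≤ ((A \ C i).card : ℝ) + ((B \ C j).card : ℝ) := by
        exact_mod_cast hcard
    _ ≤ 2 * ε * (G.maxDegree : ℝ) := by linarith
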